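/- arXiv:math/0209219 — 2 statements merged into one kernel-verified Lean document; each statement's English description precedes it below -/
import Mathlib

section
/- Let H be a connected topological group and G a topological group containing a central closed subgroup isomorphic to the circle group S¹ such that G/S¹ ≅ H. If for every x, y in G the commutator map descends to a continuous bilinear pairing H × H → S¹, then this pairing is trivial; in particular, if H is a connected compact abelian group, every such central extension G of H by S¹ is abelian. -/
open scoped commutatorElement

/-- If all powers of a circle element have positive real part, it is `1`. -/
lemma circle_eq_one_of_re_pow_pos (z : Circle) (h : ∀ n : ℕ, 0 < ((z ^ n : Circle) : ℂ).re) :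
    z = 1 := by
  set θ := Complex.arg (z : ℂ) with hθdef
  have habs : ‖(z : ℂ)‖ = 1 := Circle.norm_coe z
  have hz : (z : ℂ) = Complex.exp (θ * Complex.I) := by
    conv_lhs => rw [← Complex.norm_mul_exp_arg_mul_I (z : ℂ)]
    rw [habs]; simp [hθdef]
  have hre : ∀ n : ℕ, ((z ^ n : Circle) : ℂ).re = Real.cos (n * θ) := by
    intro n
    have h1 : ((z ^ n : Circle) : ℂ) = (z : ℂ) ^ n := by
      induction n with
      | zero => simp
      | succ n ih => rw [pow_succ, pow_succ, ← ih]; rfl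
    rw [h1, hz, ← Complex.exp_nat_mul]
    have : (n : ℂ) * (↑θ * Complex.I) = ((n * θ : ℝ) : ℂ) * Complex.I := by push_cast; ring
    rw [this, Complex.exp_re]
    simp
  have h1 : 0 < (z : ℂ).re := by simpa using h 1
  have hθlt : |θ| < Real.pi / 2 :=
    Complex.abs_arg_lt_pi_div_two_iff.2 (Or.inl h1)
  rcases eq_or_ne θ 0 with h0 | h0
  · have : (z : ℂ) = 1 := by rw [hz, h0]; simp
    exact Subtype.ext (by simpa using this)
  · exfalso
    have ht0 : 0 < |θ| := abs_pos.2 h0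
    set n : ℕ := ⌈(Real.pi / 2) / |θ|⌉₊ with hn
    have hle : Real.pi / 2 ≤ n * |θ| := by
      rw [← div_le_iff₀ ht0]
      exact Nat.le_ceil _
    have hlt : (n : ℝ) * |θ| < Real.pi / 2 + |θ| := by
      have := Nat.ceil_lt_add_one (a := (Real.pi / 2) / |θ|) (by positivity)
      calc (n : ℝ) * |θ| < ((Real.pi / 2) / |θ| + 1) * |θ| := by
            apply mul_lt_mul_of_pos_right _ ht0
            simpa [hn] using this
        _ = Real.pi / 2 + |θ| := by
            rw [add_mul, one_mul, div_mul_cancel₀ _ (ne_of_gt ht0)]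
    have hub : (n : ℝ) * |θ| ≤ Real.pi + Real.pi / 2 := by
      nlinarith [Real.pi_pos]
    have hcosle : Real.cos ((n : ℝ) * |θ|) ≤ 0 :=
      Real.cos_nonpos_of_pi_div_two_le_of_le hle hub
    have hcos : Real.cos ((n : ℝ) * |θ|) = Real.cos ((n : ℝ) * θ) := by
      rcases abs_cases θ with ⟨he, _⟩ | ⟨he, _⟩
      · rw [he]
      · rw [he, mul_neg, Real.cos_neg]
    have := h n
    rw [hre n] at this
    rw [hcos] at hcosle
    linarith

/-- Let `H` be a connected compact abelian topological group and `G` a topological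
group which is a central extension of `H` by the circle group `S¹` (given by a
continuous injection `ι : Circle →* G` with central image, equal to the kernel of a
continuous surjection `π : G →* H`).  If the commutator map of `G` descends to a
continuous bilinear pairing `β : H × H → S¹`, then `β` is trivial; in particular
`G` is abelian. -/
theorem stmt0 {G H : Type*} [Group G] [TopologicalSpace G] [IsTopologicalGroup G]
    [CommGroup H] [TopologicalSpace H] [IsTopologicalGroup H] [CompactSpace H]
    [ConnectedSpace H]
    (π : G →* H) (hπc : Continuous π) (hπs : Function.Surjective π)
    (ι : Circle →* G) (hιc : Continuous ι) (hιi : Function.Injective ι)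
    (hker : ι.range = π.ker)
    (hcent : ∀ (z : Circle) (g : G), ι z * g = g * ι z)
    (β : H → H → Circle)
    (hβc : Continuous fun p : H × H => β p.1 p.2)
    (hβl : ∀ x y z : H, β (x * y) z = β x z * β y z)
    (hβr : ∀ x y z : H, β x (y * z) = β x y * β x z)
    (hcomm : ∀ g h : G, ⁅g, h⁆ = ι (β (π g) (π h))) :
    (∀ x y : H, β x y = 1) ∧ ∀ g h : G, g * h = h * g := by
  -- basic identities
  have hβy1 : ∀ x : H, β x 1 = 1 := by
    intro x
    have := hβr x 1 1
    rw [mul_one] at this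
    exact left_eq_mul.mp this
  have hβ1y : ∀ y : H, β 1 y = 1 := by
    intro y
    have := hβl 1 1 y
    rw [mul_one] at this
    exact left_eq_mul.mp this
  have hβinv : ∀ x y : H, β x y⁻¹ = (β x y)⁻¹ := by
    intro x y
    have := hβr x y y⁻¹
    rw [mul_inv_cancel, hβy1] at this
    exact (eq_inv_of_mul_eq_one_right this.symm)
  have hpow : ∀ (x y : H) (n : ℕ), β (x ^ n) y = (β x y) ^ n := by
    intro x y n
    induction n with
    | zero => simpa using hβ1y y
    | succ n ih => rw [pow_succ, pow_succ, hβl, ih]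
  -- the "positive real part" open set
  set V : Set H := {y | ∀ x : H, 0 < ((β x y : Circle) : ℂ).re} with hV
  have hVopen : IsOpen V := by
    rw [← isClosed_compl_iff]
    have : Vᶜ = Prod.snd '' {p : H × H | ((β p.1 p.2 : Circle) : ℂ).re ≤ 0} := by
      ext y
      simp only [Set.mem_compl_iff, hV, Set.mem_setOf_eq, not_forall, not_lt, Set.mem_image,
        Prod.exists]
      constructor
      · rintro ⟨x, hx⟩; exact ⟨x, y, hx, rfl⟩
      · rintro ⟨x, y', hx, rfl⟩; exact ⟨x, hx⟩
    rw [this]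
    apply isClosedMap_snd_of_compactSpace
    have hc : Continuous fun p : H × H => ((β p.1 p.2 : Circle) : ℂ).re :=
      Complex.continuous_re.comp ((continuous_induced_dom).comp hβc)
    exact isClosed_le hc continuous_const
  -- V equals the kernel set K
  have hVsub : ∀ y ∈ V, ∀ x : H, β x y = 1 := by
    intro y hy x
    apply circle_eq_one_of_re_pow_pos
    intro n
    rw [← hpow]
    exact hy (x ^ n)
  have hKV : {y : H | ∀ x : H, β x y = 1} = V := by
    ext y
    simp only [Set.mem_setOf_eq]
    constructor
    · intro hy x
      rw [hy x]
      norm_num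
    · exact hVsub y
  -- K is an open subgroup
  set K : Subgroup H :=
    { carrier := {y : H | ∀ x : H, β x y = 1}
      one_mem' := fun x => hβy1 x
      mul_mem' := by
        intro a b ha hb x
        rw [hβr, ha x, hb x, mul_one]
      inv_mem' := by
        intro a ha x
        rw [hβinv, ha x, inv_one] } with hK
  have hKopen : IsOpen (K : Set H) := by
    show IsOpen {y : H | ∀ x : H, β x y = 1}
    rw [hKV]; exact hVopen
  have hKclosed : IsClosed (K : Set H) := K.isClosed_of_isOpen hKopen
  have hKuniv : (K : Set H) = Set.univ :=
    (IsClopen.eq_univ ⟨hKclosed, hKopen⟩ ⟨1, K.one_mem⟩)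
  have hβtriv : ∀ x y : H, β x y = 1 := by
    intro x y
    have : y ∈ (K : Set H) := hKuniv ▸ Set.mem_univ y
    exact this x
  refine ⟨hβtriv, fun g h => ?_⟩
  have : ⁅g, h⁆ = 1 := by
    rw [hcomm, hβtriv, map_one]
  exact commutatorElement_eq_one_iff_mul_comm.mp this
end

section
/- Every central extension of a real topological vector space (or more specifically of ℝ) by ℝ given by a continuous symmetric 2-cocycle splits; equivalently, every continuous symmetric 2-cocycle c : ℝ × ℝ → ℝ is a coboundary: there exists a continuous function b : ℝ → ℝ with c(x,y) = b(x+y) − b(x) − b(y). -/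
open intervalIntegral MeasureTheory

/-- Every continuous symmetric 2-cocycle `c : ℝ × ℝ → ℝ` (trivial action on the
coefficients `ℝ`) is the coboundary of a continuous function: `H²_sym(ℝ, ℝ) = 0`. -/
theorem stmt3 (c : ℝ → ℝ → ℝ) (hc : Continuous fun p : ℝ × ℝ => c p.1 p.2)
    (hcocycle : ∀ x y z : ℝ, c x y + c (x + y) z = c y z + c x (y + z))
    (hsym : ∀ x y : ℝ, c x y = c y x) :
    ∃ b : ℝ → ℝ, Continuous b ∧ ∀ x y : ℝ, c x y = b (x + y) - b x - b y := by
  -- continuity helpers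
  have hc1 : ∀ a : ℝ, Continuous fun s => c a s :=
    fun a => hc.comp (continuous_const.prodMk continuous_id)
  have hc2 : ∀ s : ℝ, Continuous fun a => c a s :=
    fun s => hc.comp (continuous_id.prodMk continuous_const)
  set g : ℝ → ℝ := fun t => c t 1 - c t 0 with hg_def
  have hg : Continuous g := (hc2 1).sub (hc2 0)
  set b : ℝ → ℝ := fun x => (∫ t in (0:ℝ)..x, g t) - ∫ s in (0:ℝ)..1, c x s with hb_def
  have hb : Continuous b := by
    apply Continuous.sub
    · exact intervalIntegral.continuous_primitive
        (fun a b => hg.intervalIntegrable a b) 0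
    · exact intervalIntegral.continuous_parametric_intervalIntegral_of_continuous'
        (f := fun x s => c x s) hc 0 1
  refine ⟨b, hb, fun x y => ?_⟩
  -- pointwise identities
  have hzero : ∀ a : ℝ, c a 0 = c 0 0 := by
    intro a
    have h := hcocycle a 0 0
    simp only [add_zero] at h
    linarith
  have key : ∀ a s y : ℝ, c (a + s) y = c s y + c a (s + y) - c a s := by
    intro a s y; linarith [hcocycle a s y]
  -- integrability helper
  have hI : ∀ (f : ℝ → ℝ), Continuous f → ∀ a b : ℝ, IntervalIntegrable f volume a b :=
    fun f hf a b => hf.intervalIntegrable a b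
  -- Step 1 : the g-part
  have e1 : (∫ t in (0:ℝ)..(x+y), g t) - ∫ t in (0:ℝ)..x, g t = ∫ t in x..(x+y), g t := by
    rw [← intervalIntegral.integral_add_adjacent_intervals (hI g hg 0 x) (hI g hg x (x+y))]
    ring
  have e2 : (∫ t in x..(x+y), g t) = ∫ t in (0:ℝ)..y, g (x + t) := by
    rw [intervalIntegral.integral_comp_add_left g x]
    simp
  have e3 : (∫ t in (0:ℝ)..y, g (x + t)) =
      (∫ t in (0:ℝ)..y, c x (t + 1)) - (∫ t in (0:ℝ)..y, c x t)
        + ((∫ t in (0:ℝ)..y, g t)) := by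
    have pt : ∀ t : ℝ, g (x + t) = c x (t + 1) - c x t + g t := by
      intro t
      have h1 := key x t 1
      have h2 := hzero (x + t)
      have h3 := hzero t
      simp only [hg_def]
      linarith
    rw [intervalIntegral.integral_congr (g := fun t => c x (t+1) - c x t + g t)
      (fun t _ => pt t)]
    have hct : Continuous fun t : ℝ => c x (t + 1) :=
      (hc1 x).comp (continuous_id.add continuous_const)
    rw [intervalIntegral.integral_add
        ((hI (fun t => c x (t + 1)) hct 0 y).sub (hI (fun t => c x t) (hc1 x) 0 y))
        (hI g hg 0 y),
      intervalIntegral.integral_sub (hI (fun t => c x (t + 1)) hct 0 y)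
        (hI (fun t => c x t) (hc1 x) 0 y)]
  have e4 : (∫ t in (0:ℝ)..y, c x (t + 1)) = ∫ u in (1:ℝ)..(y+1), c x u := by
    rw [intervalIntegral.integral_comp_add_right (fun u => c x u) 1]
    simp
  -- Step 2 : the H-part
  have e5 : (∫ s in (0:ℝ)..1, c (x+y) s) =
      (∫ s in (0:ℝ)..1, c y s) + (∫ u in y..(y+1), c x u) - c x y := by
    have pt : ∀ s : ℝ, c (x + y) s = c y s + c x (y + s) - c x y := by
      intro s; linarith [hcocycle x y s]
    rw [intervalIntegral.integral_congr (g := fun s => c y s + c x (y + s) - c x y)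
      (fun s _ => pt s)]
    have hcs : Continuous fun s : ℝ => c x (y + s) :=
      (hc1 x).comp (continuous_const.add continuous_id)
    rw [intervalIntegral.integral_sub
        ((hI (fun s => c y s) (hc1 y) 0 1).add (hI (fun s => c x (y + s)) hcs 0 1))
        (hI (fun _ => c x y) continuous_const 0 1),
      intervalIntegral.integral_add (hI (fun s => c y s) (hc1 y) 0 1)
        (hI (fun s => c x (y + s)) hcs 0 1)]
    rw [intervalIntegral.integral_comp_add_left (fun u => c x u) y]
    simp
  -- combine
  have adj1 : (∫ u in (0:ℝ)..1, c x u) + (∫ u in (1:ℝ)..(y+1), c x u)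
      = ∫ u in (0:ℝ)..(y+1), c x u :=
    intervalIntegral.integral_add_adjacent_intervals (hI _ (hc1 x) 0 1) (hI _ (hc1 x) 1 (y+1))
  have adj2 : (∫ u in (0:ℝ)..y, c x u) + (∫ u in y..(y+1), c x u)
      = ∫ u in (0:ℝ)..(y+1), c x u :=
    intervalIntegral.integral_add_adjacent_intervals (hI _ (hc1 x) 0 y) (hI _ (hc1 x) y (y+1))
  simp only [hb_def]
  have := e1
  rw [e2, e3, e4] at e1
  linarith [e1, e5, adj1, adj2]
end
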